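/- For every r ≥ 0, (2/√π)·e^{−r²}/(r + √(r² + 2)) ≤ erfc(r) ≤ (2/√π)·e^{−r²}/(r + √(r² + 4/π)). -/

import Mathlib

open Real MeasureTheory Set Filter

noncomputable def II (x : ℝ) : ℝ := ∫ t in Set.Ioi x, Real.exp (-t ^ 2)

lemma f_int : Integrable (fun t : ℝ => Real.exp (-t ^ 2)) := by
  simpa using integrable_exp_neg_mul_sq (one_pos)

lemma f_cont : Continuous (fun t : ℝ => Real.exp (-t ^ 2)) := by continuity

lemma II_split {a b : ℝ} (hab : a ≤ b) :
    II b = II a - ∫ t in a..b, Real.exp (-t ^ 2) := by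
  have h : II a = (∫ t in Set.Ioc a b, Real.exp (-t ^ 2)) + II b := by
    rw [II, II, ← setIntegral_union (Set.Ioc_disjoint_Ioi le_rfl) measurableSet_Ioi
      f_int.integrableOn f_int.integrableOn, Set.Ioc_union_Ioi_eq_Ioi hab]
  rw [intervalIntegral.integral_of_le hab]
  linarith [h]

lemma II_eq (x : ℝ) : II x = II 0 - ∫ t in (0:ℝ)..x, Real.exp (-t ^ 2) := by
  rcases le_total 0 x with h | h
  · exact II_split h
  · have := II_split h
    rw [intervalIntegral.integral_symm] at this
    linarith [this]

lemma hasDerivAt_II (x : ℝ) : HasDerivAt II (-Real.exp (-x ^ 2)) x := by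
  have h1 : HasDerivAt (fun u => ∫ t in (0:ℝ)..u, Real.exp (-t ^ 2)) (Real.exp (-x ^ 2)) x :=
    intervalIntegral.integral_hasDerivAt_right (f_int.intervalIntegrable)
      (f_cont.stronglyMeasurable.stronglyMeasurableAtFilter) f_cont.continuousAt
  have : II = fun u => II 0 - ∫ t in (0:ℝ)..u, Real.exp (-t ^ 2) := funext II_eq
  rw [this]
  simpa using (h1.const_sub (II 0))

lemma II_tendsto : Tendsto II atTop (nhds 0) := by
  have h1 : Tendsto (fun x => ∫ t in (0:ℝ)..x, Real.exp (-t ^ 2)) atTop (nhds (II 0)) :=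
    intervalIntegral_tendsto_integral_Ioi 0 f_int.integrableOn tendsto_id
  have h2 := (tendsto_const_nhds (α := ℝ) (x := II 0) (f := atTop)).sub h1
  simp only [sub_self] at h2
  exact h2.congr (fun x => (II_eq x).symm)

noncomputable def phi (c x : ℝ) : ℝ := Real.exp (-x ^ 2) / (x + Real.sqrt (x ^ 2 + c))

lemma s_pos {c : ℝ} (hc : 0 < c) (x : ℝ) : 0 < Real.sqrt (x ^ 2 + c) :=
  Real.sqrt_pos.2 (by positivity)

lemma den_pos {c : ℝ} (hc : 0 < c) (x : ℝ) : 0 < x + Real.sqrt (x ^ 2 + c) := by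
  have h1 : |x| < Real.sqrt (x ^ 2 + c) := by
    rw [← Real.sqrt_sq_eq_abs]
    exact Real.sqrt_lt_sqrt (sq_nonneg x) (by linarith)
  linarith [neg_abs_le x]

lemma hasDerivAt_s {c : ℝ} (hc : 0 < c) (x : ℝ) :
    HasDerivAt (fun y => Real.sqrt (y ^ 2 + c)) (x / Real.sqrt (x ^ 2 + c)) x := by
  have hin : HasDerivAt (fun y : ℝ => y ^ 2 + c) (2 * x) x := by
    simpa using (hasDerivAt_pow 2 x).add_const c
  have h := (Real.hasDerivAt_sqrt (by positivity : x ^ 2 + c ≠ 0)).comp x hin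
  refine h.congr_deriv ?_
  have := (s_pos hc x).ne'
  field_simp

lemma hasDerivAt_e (x : ℝ) :
    HasDerivAt (fun y : ℝ => Real.exp (-y ^ 2)) (-2 * x * Real.exp (-x ^ 2)) x := by
  have hin : HasDerivAt (fun y : ℝ => -y ^ 2) (-(2 * x)) x := by
    simpa using (hasDerivAt_pow 2 x).fun_neg
  have := (Real.hasDerivAt_exp (-x ^ 2)).comp x hin
  refine this.congr_deriv ?_
  ring

lemma hasDerivAt_phi {c : ℝ} (hc : 0 < c) (x : ℝ) :
    HasDerivAt (phi c)
      ((-2 * x * Real.exp (-x ^ 2) * (x + Real.sqrt (x ^ 2 + c)) -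
        Real.exp (-x ^ 2) * (1 + x / Real.sqrt (x ^ 2 + c))) /
        (x + Real.sqrt (x ^ 2 + c)) ^ 2) x := by
  exact (hasDerivAt_e x).div ((hasDerivAt_id x).add (hasDerivAt_s hc x)) (den_pos hc x).ne'

lemma deriv_formula {c : ℝ} (hc : 0 < c) (x : ℝ) :
    -Real.exp (-x ^ 2) -
      ((-2 * x * Real.exp (-x ^ 2) * (x + Real.sqrt (x ^ 2 + c)) -
        Real.exp (-x ^ 2) * (1 + x / Real.sqrt (x ^ 2 + c))) /
        (x + Real.sqrt (x ^ 2 + c)) ^ 2) =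
    Real.exp (-x ^ 2) * (1 - c + x / Real.sqrt (x ^ 2 + c)) /
      (x + Real.sqrt (x ^ 2 + c)) ^ 2 := by
  set s := Real.sqrt (x ^ 2 + c) with hs
  have hs2 : s ^ 2 = x ^ 2 + c := Real.sq_sqrt (by positivity)
  have hsne : s ≠ 0 := (s_pos hc x).ne'
  have hgne : x + s ≠ 0 := (den_pos hc x).ne'
  field_simp
  linear_combination (-s) * hs2

noncomputable def hh (c x : ℝ) : ℝ := II x - phi c x

lemma hasDerivAt_hh {c : ℝ} (hc : 0 < c) (x : ℝ) :
    HasDerivAt (hh c)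
      (Real.exp (-x ^ 2) * (1 - c + x / Real.sqrt (x ^ 2 + c)) /
        (x + Real.sqrt (x ^ 2 + c)) ^ 2) x := by
  have := (hasDerivAt_II x).sub (hasDerivAt_phi hc x)
  rwa [show (-Real.exp (-x ^ 2) -
      ((-2 * x * Real.exp (-x ^ 2) * (x + Real.sqrt (x ^ 2 + c)) -
        Real.exp (-x ^ 2) * (1 + x / Real.sqrt (x ^ 2 + c))) /
        (x + Real.sqrt (x ^ 2 + c)) ^ 2)) = _ from deriv_formula hc x] at this

lemma hh_diff {c : ℝ} (hc : 0 < c) : Differentiable ℝ (hh c) :=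
  fun x => (hasDerivAt_hh hc x).differentiableAt

lemma deriv_hh {c : ℝ} (hc : 0 < c) (x : ℝ) :
    deriv (hh c) x = Real.exp (-x ^ 2) * (1 - c + x / Real.sqrt (x ^ 2 + c)) /
      (x + Real.sqrt (x ^ 2 + c)) ^ 2 := (hasDerivAt_hh hc x).deriv

lemma ratio_mono {c : ℝ} (hc : 0 < c) {a b : ℝ} (ha : 0 ≤ a) (hab : a ≤ b) :
    a / Real.sqrt (a ^ 2 + c) ≤ b / Real.sqrt (b ^ 2 + c) := by
  rw [div_le_div_iff₀ (s_pos hc a) (s_pos hc b)]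
  have hb : 0 ≤ b := ha.trans hab
  have h1 : a * Real.sqrt (b ^ 2 + c) = Real.sqrt (a ^ 2 * (b ^ 2 + c)) := by
    rw [Real.sqrt_mul (by positivity), Real.sqrt_sq ha]
  have h2 : b * Real.sqrt (a ^ 2 + c) = Real.sqrt (b ^ 2 * (a ^ 2 + c)) := by
    rw [Real.sqrt_mul (by positivity), Real.sqrt_sq hb]
  rw [h1, h2]
  apply Real.sqrt_le_sqrt
  nlinarith [mul_le_mul_of_nonneg_left (pow_le_pow_left₀ ha hab 2) hc.le]

lemma phi_tendsto {c : ℝ} (hc : 0 < c) : Tendsto (phi c) atTop (nhds 0) := by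
  have he : Tendsto (fun x : ℝ => Real.exp (-x ^ 2)) atTop (nhds 0) := by
    apply Real.tendsto_exp_atBot.comp
    have : Tendsto (fun x : ℝ => x ^ 2) atTop atTop :=
      tendsto_pow_atTop (two_ne_zero)
    exact tendsto_neg_atBot_iff.mpr this
  apply tendsto_of_tendsto_of_tendsto_of_le_of_le' tendsto_const_nhds he
  · filter_upwards with x
    exact div_nonneg (Real.exp_pos _).le (den_pos hc x).le
  · filter_upwards [eventually_ge_atTop (1:ℝ)] with x hx
    have hg : 1 ≤ x + Real.sqrt (x ^ 2 + c) := le_add_of_le_of_nonneg hx (Real.sqrt_nonneg _)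
    exact div_le_self (Real.exp_pos _).le hg

lemma hh_tendsto {c : ℝ} (hc : 0 < c) : Tendsto (hh c) atTop (nhds 0) := by
  have := II_tendsto.sub (phi_tendsto hc)
  rw [sub_zero] at this
  exact this

-- lower bound: c = 2
lemma hh_two_nonneg (r : ℝ) : 0 ≤ hh 2 r := by
  have hc : (0:ℝ) < 2 := two_pos
  have hanti : Antitone (hh 2) := by
    apply antitone_of_deriv_nonpos (hh_diff hc)
    intro x
    rw [deriv_hh hc]
    apply div_nonpos_of_nonpos_of_nonneg _ (by positivity)
    apply mul_nonpos_of_nonneg_of_nonpos (Real.exp_pos _).le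
    have hxs : x ≤ Real.sqrt (x ^ 2 + 2) := by
      calc x ≤ |x| := le_abs_self x
        _ = Real.sqrt (x ^ 2) := (Real.sqrt_sq_eq_abs x).symm
        _ ≤ _ := Real.sqrt_le_sqrt (by linarith)
    have : x / Real.sqrt (x ^ 2 + 2) ≤ 1 := (div_le_one (s_pos hc x)).2 hxs
    linarith
  have hev : ∀ᶠ y in atTop, hh 2 y ≤ hh 2 r := by
    filter_upwards [eventually_ge_atTop r] with y hy
    exact hanti hy
  exact le_of_tendsto (hh_tendsto hc) hev

-- upper bound: c = 4/π
lemma hh_zero : hh (4 / π) 0 = 0 := by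
  have hII : II 0 = Real.sqrt π / 2 := by
    have := integral_gaussian_Ioi 1
    simp only [neg_mul, one_mul, div_one] at this
    simpa [II] using this
  have hsq : Real.sqrt (4 / π) = 2 / Real.sqrt π := by
    rw [show (4:ℝ) / π = 2 ^ 2 / π by norm_num, Real.sqrt_div (by positivity), Real.sqrt_sq
      (by norm_num)]
  have hpi : Real.sqrt π ≠ 0 := by positivity
  simp only [hh, phi, hII]
  norm_num [hsq]

lemma hh_pi_nonpos (r : ℝ) (hr : 0 ≤ r) : hh (4 / π) r ≤ 0 := by
  have hc : (0:ℝ) < 4 / π := by positivity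
  set c := (4:ℝ) / π with hcdef
  rcases le_or_gt (1 - c + r / Real.sqrt (r ^ 2 + c)) 0 with hK | hK
  · -- antitone on [0, r]
    have hanti : AntitoneOn (hh c) (Set.Icc 0 r) := by
      apply antitoneOn_of_deriv_nonpos (convex_Icc 0 r)
        ((hh_diff hc).continuous.continuousOn) ((hh_diff hc).differentiableOn)
      intro x hx
      rw [interior_Icc] at hx
      rw [deriv_hh hc]
      apply div_nonpos_of_nonpos_of_nonneg _ (by positivity)
      apply mul_nonpos_of_nonneg_of_nonpos (Real.exp_pos _).le
      have := ratio_mono hc hx.1.le hx.2.le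
      linarith
    have := hanti (Set.left_mem_Icc.2 hr) (Set.right_mem_Icc.2 hr) hr
    rw [hh_zero] at this
    exact this
  · -- monotone on [r, ∞)
    have hmono : MonotoneOn (hh c) (Set.Ici r) := by
      apply monotoneOn_of_deriv_nonneg (convex_Ici r)
        ((hh_diff hc).continuous.continuousOn) ((hh_diff hc).differentiableOn)
      intro x hx
      rw [interior_Ici] at hx
      rw [deriv_hh hc]
      apply div_nonneg _ (by positivity)
      apply mul_nonneg (Real.exp_pos _).le
      have := ratio_mono hc hr hx.le
      linarith
    have hev : ∀ᶠ y in atTop, hh c r ≤ hh c y := by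
      filter_upwards [eventually_ge_atTop r] with y hy
      exact hmono Set.self_mem_Ici hy hy
    exact ge_of_tendsto (hh_tendsto hc) hev

/-- The complementary error function `erfc r = (2/√π) ∫_r^∞ e^{-t²} dt`. -/
noncomputable def erfc (r : ℝ) : ℝ :=
  (2 / Real.sqrt π) * ∫ t in Set.Ioi r, Real.exp (-t ^ 2)

theorem erfc_bounds (r : ℝ) (hr : 0 ≤ r) :
    (2 / Real.sqrt π) * Real.exp (-r ^ 2) / (r + Real.sqrt (r ^ 2 + 2)) ≤ erfc r ∧
    erfc r ≤ (2 / Real.sqrt π) * Real.exp (-r ^ 2) / (r + Real.sqrt (r ^ 2 + 4 / π)) := by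
  have hcoef : (0:ℝ) ≤ 2 / Real.sqrt π := by positivity
  have herfc : erfc r = (2 / Real.sqrt π) * II r := rfl
  constructor
  · have h1 : phi 2 r ≤ II r := by have := hh_two_nonneg r; simp only [hh] at this; linarith
    rw [herfc, mul_div_assoc]
    exact mul_le_mul_of_nonneg_left h1 hcoef
  · have h1 : II r ≤ phi (4 / π) r := by
      have := hh_pi_nonpos r hr; simp only [hh] at this; linarith
    rw [herfc, mul_div_assoc]
    exact mul_le_mul_of_nonneg_left h1 hcoef
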